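/- Let U > 0, l > 0, and let ū : ℝ → [−U/2, U/2] be measurable and non-increasing with ∫_ℝ z (ū(z) − u₀(z)) dz = U l²/2, where u₀(z) = −U/2 for z ≥ 0 and u₀(z) = U/2 for z < 0. Then (1/U) ∫_ℝ u₀(z)(u₀(z) − ū(z)) dz ≤ U l / 2. -/

import Mathlib

set_option maxHeartbeats 1000000


/- STATEMENT 14: for a measurable non-increasing profile ū : ℝ → [−U/2, U/2]
with moment ∫ z (ū − u₀) dz = U l²/2, the correlation with the unperturbed
vortex sheet satisfies (1/U) ∫ u₀ (u₀ − ū) dz ≤ U l / 2. -/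

open MeasureTheory

noncomputable section

/-- the reference (discontinuous) shear profile u₀ -/
def u0 (U z : ℝ) : ℝ := if 0 ≤ z then -U / 2 else U / 2

/-- Bathtub principle: if `0 ≤ h ≤ α` on `(0,∞)` then
`(∫ h)² ≤ 2 α ∫ z h`. -/
lemma bathtub (α : ℝ) (hα : 0 ≤ α) (h : ℝ → ℝ)
    (h0 : ∀ z ∈ Set.Ioi (0:ℝ), 0 ≤ h z) (h1 : ∀ z ∈ Set.Ioi (0:ℝ), h z ≤ α)
    (hint : IntegrableOn h (Set.Ioi 0))
    (hzint : IntegrableOn (fun z => z * h z) (Set.Ioi 0)) :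
    (∫ z in Set.Ioi (0:ℝ), h z) ^ 2 ≤ 2 * α * ∫ z in Set.Ioi (0:ℝ), z * h z := by
  rcases eq_or_lt_of_le hα with hα0 | hαpos
  · -- α = 0 : h vanishes on (0,∞)
    have hz : ∀ z ∈ Set.Ioi (0:ℝ), h z = 0 := by
      intro z hz
      have := h1 z hz
      rw [← hα0] at this
      exact le_antisymm this (h0 z hz)
    have hA : (∫ z in Set.Ioi (0:ℝ), h z) = 0 := by
      rw [setIntegral_congr_fun measurableSet_Ioi hz]; simp
    have hM : (∫ z in Set.Ioi (0:ℝ), z * h z) = 0 := by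
      rw [setIntegral_congr_fun measurableSet_Ioi (fun z hzz => by rw [hz z hzz, mul_zero])]
      simp
    rw [hA, hM]; norm_num
  · set A := ∫ z in Set.Ioi (0:ℝ), h z with hAdef
    have hA0 : 0 ≤ A := setIntegral_nonneg measurableSet_Ioi h0
    set t := A / α with htdef
    have ht0 : 0 ≤ t := div_nonneg hA0 hα
    have hta : α * t = A := by rw [htdef]; field_simp
    -- split the domain
    have hsplit : Set.Ioc (0:ℝ) t ∪ Set.Ioi t = Set.Ioi (0:ℝ) :=
      Set.Ioc_union_Ioi_eq_Ioi ht0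
    have hdisj : Disjoint (Set.Ioc (0:ℝ) t) (Set.Ioi t) := Set.Ioc_disjoint_Ioi le_rfl
    have hint1 : IntegrableOn h (Set.Ioc (0:ℝ) t) :=
      hint.mono_set (by rw [← hsplit]; exact Set.subset_union_left)
    have hint2 : IntegrableOn h (Set.Ioi t) :=
      hint.mono_set (by rw [← hsplit]; exact Set.subset_union_right)
    have hzint1 : IntegrableOn (fun z => z * h z) (Set.Ioc (0:ℝ) t) :=
      hzint.mono_set (by rw [← hsplit]; exact Set.subset_union_left)
    have hzint2 : IntegrableOn (fun z => z * h z) (Set.Ioi t) :=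
      hzint.mono_set (by rw [← hsplit]; exact Set.subset_union_right)
    have hAsplit : A = (∫ z in Set.Ioc (0:ℝ) t, h z) + ∫ z in Set.Ioi t, h z := by
      rw [hAdef, ← hsplit, setIntegral_union hdisj measurableSet_Ioi hint1 hint2]
    have hMsplit : (∫ z in Set.Ioi (0:ℝ), z * h z)
        = (∫ z in Set.Ioc (0:ℝ) t, z * h z) + ∫ z in Set.Ioi t, z * h z := by
      rw [← hsplit, setIntegral_union hdisj measurableSet_Ioi hzint1 hzint2]
    -- reference integrals on Ioc 0 t
    have hidint : ∫ z in Set.Ioc (0:ℝ) t, z = t ^ 2 / 2 := by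
      rw [← intervalIntegral.integral_of_le ht0, integral_id]; ring
    have hconst : ∫ z in Set.Ioc (0:ℝ) t, α = t * α := by
      rw [setIntegral_const, measureReal_def, Real.volume_Ioc, smul_eq_mul,
        ENNReal.toReal_ofReal (by linarith)]
      ring
    -- lower bound on Ioc 0 t
    have key1 : (∫ z in Set.Ioc (0:ℝ) t, (α * z + t * (h z - α)))
        ≤ ∫ z in Set.Ioc (0:ℝ) t, z * h z := by
      have hf1 : IntegrableOn (fun z => α * z) (Set.Ioc (0:ℝ) t) :=
        (continuous_const.mul continuous_id).integrableOn_Ioc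
      have hconst_int : IntegrableOn (fun _ : ℝ => α) (Set.Ioc (0:ℝ) t) :=
        integrableOn_const measure_Ioc_lt_top.ne
      have hf2 : IntegrableOn (fun z => t * (h z - α)) (Set.Ioc (0:ℝ) t) :=
        (hint1.sub hconst_int).const_mul t
      refine setIntegral_mono_on (hf1.add hf2) hzint1 measurableSet_Ioc ?_
      · intro z hz
        have hz1 : 0 < z := hz.1
        have hz2 : z ≤ t := hz.2
        have hle : h z ≤ α := h1 z hz1
        nlinarith [mul_nonneg (sub_nonneg.2 hz2) (sub_nonneg.2 hle)]
    have key1' : (∫ z in Set.Ioc (0:ℝ) t, (α * z + t * (h z - α)))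
        = α * (t ^ 2 / 2) + t * ((∫ z in Set.Ioc (0:ℝ) t, h z) - t * α) := by
      have hf1 : IntegrableOn (fun z => α * z) (Set.Ioc (0:ℝ) t) :=
        (continuous_const.mul continuous_id).integrableOn_Ioc
      have hconst_int : IntegrableOn (fun _ : ℝ => α) (Set.Ioc (0:ℝ) t) :=
        integrableOn_const measure_Ioc_lt_top.ne
      have hf2 : IntegrableOn (fun z => t * (h z - α)) (Set.Ioc (0:ℝ) t) :=
        (hint1.sub hconst_int).const_mul t
      rw [integral_add hf1 hf2, integral_const_mul, integral_const_mul,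
        integral_sub hint1 hconst_int, hconst]
      simp only [hidint]
      try ring
    -- lower bound on Ioi t
    have key2 : t * (∫ z in Set.Ioi t, h z) ≤ ∫ z in Set.Ioi t, z * h z := by
      rw [← integral_const_mul]
      refine setIntegral_mono_on (hint2.const_mul t) hzint2 measurableSet_Ioi ?_
      intro z hz
      have : t < z := hz
      have hhz : 0 ≤ h z := h0 z (lt_of_le_of_lt ht0 this)
      exact mul_le_mul_of_nonneg_right this.le hhz
    -- combine
    have hM : t * A - α * t ^ 2 / 2 ≤ ∫ z in Set.Ioi (0:ℝ), z * h z := by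
      rw [hMsplit]
      have := le_trans (le_of_eq key1'.symm) key1
      nlinarith [key2, hAsplit]
    nlinarith [hM, hta, sq_nonneg (A - α * t)]

theorem correlation_estimate
    (U l : ℝ) (hU : 0 < U) (hl : 0 < l)
    (ubar : ℝ → ℝ) (h_meas : Measurable ubar) (h_anti : Antitone ubar)
    (h_range : ∀ z : ℝ, ubar z ∈ Set.Icc (-(U/2)) (U/2))
    (h_mom_int : MeasureTheory.Integrable (fun z => z * (ubar z - u0 U z)))
    (h_mom : (∫ z : ℝ, z * (ubar z - u0 U z)) = U * l ^ 2 / 2) :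
    (1 / U) * ∫ z : ℝ, u0 U z * (u0 U z - ubar z) ≤ U * l / 2 := by
  classical
  set c := ubar 0 with hcdef
  obtain ⟨hc1, hc2⟩ := h_range 0
  obtain ⟨h, hhdef⟩ : ∃ h : ℝ → ℝ,
      h = fun z => if 0 ≤ z then U / 2 + ubar z else U / 2 - ubar z := ⟨_, rfl⟩
  have hh0 : ∀ z, 0 ≤ h z := by
    intro z
    obtain ⟨hr1, hr2⟩ := h_range z
    simp only [hhdef]
    split_ifs <;> linarith
  have hhU : ∀ z, h z ≤ U := by
    intro z
    obtain ⟨hr1, hr2⟩ := h_range z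
    simp only [hhdef]
    split_ifs <;> linarith
  have hhr : ∀ z : ℝ, 0 ≤ z → h z ≤ U / 2 + c := by
    intro z hz
    have := h_anti hz
    simp only [hhdef, if_pos hz]
    linarith
  have hhl : ∀ z : ℝ, z < 0 → h z ≤ U / 2 - c := by
    intro z hz
    have := h_anti hz.le
    simp only [hhdef, if_neg (not_le.2 hz)]
    linarith
  have hh_meas : Measurable h := by
    rw [hhdef]
    exact Measurable.ite measurableSet_Ici (measurable_const.add h_meas)
      (measurable_const.sub h_meas)
  -- pointwise identities
  have hid1 : ∀ z, u0 U z * (u0 U z - ubar z) = (U / 2) * h z := by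
    intro z
    simp only [u0, hhdef]
    split_ifs <;> ring
  have hid2 : ∀ z, z * (ubar z - u0 U z) = |z| * h z := by
    intro z
    simp only [u0, hhdef]
    split_ifs with hz
    · rw [abs_of_nonneg hz]; ring
    · rw [abs_of_neg (not_le.1 hz)]; ring
  have hfun2 : (fun z => z * (ubar z - u0 U z)) = fun z => |z| * h z := funext hid2
  rw [hfun2] at h_mom_int h_mom
  -- integrability of h
  have hh_int : Integrable h := by
    refine Integrable.mono' (g := fun z =>
        Set.indicator (Set.Icc (-1:ℝ) 1) (fun _ => U) z + |z| * h z)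
      ?_ hh_meas.aestronglyMeasurable ?_
    · exact ((integrableOn_const measure_Icc_lt_top.ne).integrable_indicator
        measurableSet_Icc).add h_mom_int
    · refine Filter.Eventually.of_forall (fun z => ?_)
      rw [Real.norm_eq_abs, abs_of_nonneg (hh0 z)]
      by_cases hz : z ∈ Set.Icc (-1:ℝ) 1
      · simp only [Set.indicator_of_mem hz]
        have : |z| * h z ≥ 0 := mul_nonneg (abs_nonneg z) (hh0 z)
        linarith [hhU z]
      · simp only [Set.indicator_of_notMem hz]
        have h1z : 1 ≤ |z| := by
          by_contra hcon
          obtain ⟨ha1, ha2⟩ := abs_lt.1 (not_le.1 hcon)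
          exact hz ⟨le_of_lt ha1, le_of_lt ha2⟩
        have := mul_le_mul_of_nonneg_right h1z (hh0 z)
        linarith
  -- split moments and masses
  set A := ∫ z in Set.Ioi (0:ℝ), h z with hAdef
  set B := ∫ z in Set.Iic (0:ℝ), h z with hBdef
  set Mp := ∫ z in Set.Ioi (0:ℝ), |z| * h z with hMpdef
  set Mn := ∫ z in Set.Iic (0:ℝ), |z| * h z with hMndef
  have hsplith : (∫ z : ℝ, h z) = B + A :=
    (intervalIntegral.integral_Iic_add_Ioi hh_int.integrableOn hh_int.integrableOn).symm
  have hsplitm : Mn + Mp = U * l ^ 2 / 2 := by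
    rw [hMpdef, hMndef, intervalIntegral.integral_Iic_add_Ioi h_mom_int.integrableOn h_mom_int.integrableOn,
      h_mom]
  have hA0 : 0 ≤ A := setIntegral_nonneg measurableSet_Ioi (fun z _ => hh0 z)
  have hB0 : 0 ≤ B := setIntegral_nonneg measurableSet_Iic (fun z _ => hh0 z)
  have hMp0 : 0 ≤ Mp := setIntegral_nonneg measurableSet_Ioi
    (fun z _ => mul_nonneg (abs_nonneg z) (hh0 z))
  have hMn0 : 0 ≤ Mn := setIntegral_nonneg measurableSet_Iic
    (fun z _ => mul_nonneg (abs_nonneg z) (hh0 z))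
  -- right-side bathtub
  have hright : A ^ 2 ≤ 2 * (U / 2 + c) * Mp := by
    have hMp' : Mp = ∫ z in Set.Ioi (0:ℝ), z * h z := by
      rw [hMpdef]
      exact setIntegral_congr_fun measurableSet_Ioi
        (fun z hz => by rw [abs_of_pos hz])
    rw [hMp']
    exact bathtub (U / 2 + c) (by linarith) h (fun z _ => hh0 z)
      (fun z hz => hhr z (le_of_lt hz)) hh_int.integrableOn
      (h_mom_int.integrableOn.congr_fun
        (fun z hz => by dsimp only; rw [abs_of_pos hz]) measurableSet_Ioi)
  -- left-side bathtub via reflection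
  have hleft : B ^ 2 ≤ 2 * (U / 2 - c) * Mn := by
    set g : ℝ → ℝ := fun z => h (-z) with hgdef
    have hg_int : Integrable g := hh_int.comp_neg
    have hB' : B = ∫ z in Set.Ioi (0:ℝ), g z := by
      rw [hgdef, integral_comp_neg_Ioi, neg_zero]
    have hmg_int : Integrable (fun z => |z| * g z) := by
      have := h_mom_int.comp_neg
      simpa [hgdef, abs_neg] using this
    have hMn' : Mn = ∫ z in Set.Ioi (0:ℝ), z * g z := by
      have : (∫ z in Set.Ioi (0:ℝ), |(-z)| * h (-z)) = ∫ z in Set.Iic (0:ℝ), |z| * h z :=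
        integral_comp_neg_Ioi 0 (fun z => |z| * h z) ▸ by rw [neg_zero]
      rw [hMndef, ← this]
      exact setIntegral_congr_fun measurableSet_Ioi
        (fun z hz => by rw [abs_neg, abs_of_pos hz, hgdef])
    rw [hB', hMn']
    refine bathtub (U / 2 - c) (by linarith) g (fun z _ => hh0 _)
      (fun z hz => hhl (-z) (by simpa using hz)) hg_int.integrableOn ?_
    exact hmg_int.integrableOn.congr_fun
      (fun z hz => by dsimp only; rw [abs_of_pos hz]) measurableSet_Ioi
  -- combine with Cauchy–Schwarz
  have hαβ : (0:ℝ) ≤ U / 2 + c ∧ (0:ℝ) ≤ U / 2 - c := ⟨by linarith, by linarith⟩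
  have hAB : A * B ≤ (U / 2 + c) * Mn + (U / 2 - c) * Mp := by
    have p1 : (A * B) ^ 2 ≤ 4 * ((U / 2 + c) * Mp) * ((U / 2 - c) * Mn) := by
      have := mul_le_mul hright hleft (sq_nonneg B)
        (by nlinarith [mul_nonneg hαβ.1 hMp0] : (0:ℝ) ≤ 2 * (U / 2 + c) * Mp)
      nlinarith [this]
    have p2 : 4 * ((U / 2 + c) * Mp) * ((U / 2 - c) * Mn)
        ≤ ((U / 2 + c) * Mn + (U / 2 - c) * Mp) ^ 2 := by
      nlinarith [sq_nonneg ((U / 2 + c) * Mn - (U / 2 - c) * Mp)]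
    have hS0 : 0 ≤ (U / 2 + c) * Mn + (U / 2 - c) * Mp :=
      add_nonneg (mul_nonneg hαβ.1 hMn0) (mul_nonneg hαβ.2 hMp0)
    calc A * B = Real.sqrt ((A * B) ^ 2) := (Real.sqrt_sq (mul_nonneg hA0 hB0)).symm
      _ ≤ Real.sqrt (((U / 2 + c) * Mn + (U / 2 - c) * Mp) ^ 2) :=
          Real.sqrt_le_sqrt (le_trans p1 p2)
      _ = _ := Real.sqrt_sq hS0
  have hsum : (A + B) ^ 2 ≤ (U * l) ^ 2 := by
    have : (A + B) ^ 2 ≤ 2 * U * (Mn + Mp) := by nlinarith [hright, hleft, hAB]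
    calc (A + B) ^ 2 ≤ 2 * U * (Mn + Mp) := this
      _ = (U * l) ^ 2 := by rw [hsplitm]; ring
  have hABle : A + B ≤ U * l := by
    nlinarith [hsum, hA0, hB0, mul_pos hU hl]
  -- conclude
  have hfin : (∫ z : ℝ, h z) ≤ U * l := by rw [hsplith]; linarith
  have hid1' : (fun z => u0 U z * (u0 U z - ubar z)) = fun z => (U / 2) * h z :=
    funext hid1
  rw [hid1', integral_const_mul]
  have : (1 / U) * (U / 2 * ∫ z : ℝ, h z) = (∫ z : ℝ, h z) / 2 := by
    field_simp
  rw [this]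
  linarith
end
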